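/- arXiv:1409.1313 — 3 statements merged into one kernel-verified Lean document; each statement's English description precedes it below -/
import Mathlib

section
/- Let k ≥ 1 and let n_1, …, n_k ≥ 2 be integers. For each i, let S_i be the commutative monoid obtained by adjoining a zero (absorbing) element ∞_i to a cyclic group C_{n_i} of order n_i, and let S = S_1 × S_2 × ⋯ × S_k be the direct product of these monoids. Then D(S) = D(U(S)), where U(S) ≅ C_{n_1} × ⋯ × C_{n_k} is the group of units of S. -/
/-- The Davenport constant of a finite commutative monoid `M`: the least positive
integer `d` such that every sequence (multiset) over `M` of length at least `d` is
reducible, i.e. has a proper subsequence (possibly empty) with the same product. -/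
noncomputable def DavenportM (M : Type*) [CommMonoid M] : ℕ :=
  sInf {d : ℕ | 0 < d ∧ ∀ T : Multiset M, d ≤ Multiset.card T →
    ∃ T' : Multiset M, T' ≤ T ∧ T' ≠ T ∧ T'.prod = T.prod}

/-- The (classical) Davenport constant of a finite abelian group `G`: the least positive
integer `d` such that every sequence (multiset) over `G` of length at least `d` has a
nonempty subsequence whose product is the identity. -/
noncomputable def DavenportG (G : Type*) [CommGroup G] : ℕ :=
  sInf {d : ℕ | 0 < d ∧ ∀ T : Multiset G, d ≤ Multiset.card T →
    ∃ T' : Multiset G, T' ≤ T ∧ T' ≠ 0 ∧ T'.prod = 1}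

open Multiset

namespace DavenportAux

variable {α β : Type*}

/-- Pull back a sub-multiset along `map`. -/
lemma exists_le_of_le_map {f : α → β} :
    ∀ {t : Multiset α} {s : Multiset β}, s ≤ t.map f → ∃ u, u ≤ t ∧ u.map f = s := by
  intro t
  induction t using Multiset.induction with
  | empty =>
    intro s hs
    rw [Multiset.map_zero, Multiset.le_zero] at hs
    exact ⟨0, le_refl _, by simp [hs]⟩
  | cons a t ih =>
    intro s hs
    rw [Multiset.map_cons] at hs
    by_cases h : f a ∈ s
    · obtain ⟨s', rfl⟩ := Multiset.exists_cons_of_mem h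
      obtain ⟨u, hu, rfl⟩ := ih ((Multiset.cons_le_cons_iff (f a)).mp hs)
      exact ⟨a ::ₘ u, Multiset.cons_le_cons _ hu, by simp⟩
    · obtain ⟨u, hu, rfl⟩ := ih ((Multiset.le_cons_of_notMem h).mp hs)
      exact ⟨u, le_trans hu (Multiset.le_cons_self _ _), rfl⟩

/-- Riesz decomposition for multisets. -/
lemma split [DecidableEq α] {a b c : Multiset α} (h : c ≤ a + b) :
    ∃ a' b', a' ≤ a ∧ b' ≤ b ∧ c = a' + b' := by
  refine ⟨c - (c - a), c - a, tsub_tsub_le, tsub_le_iff_left.mpr h, ?_⟩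
  exact (tsub_add_cancel_of_le tsub_le_self).symm

/-- Pigeonhole: long sequences over a finite group have nonempty 1-product subsequences. -/
lemma exists_nonempty_prod_one {G : Type*} [CommGroup G] [Fintype G]
    (T : Multiset G) (h : Fintype.card G ≤ Multiset.card T) :
    ∃ T' : Multiset G, T' ≤ T ∧ T' ≠ 0 ∧ T'.prod = 1 := by
  obtain ⟨l, rfl⟩ : ∃ l : List G, (l : Multiset G) = T := ⟨T.toList, T.coe_toList⟩
  rw [Multiset.coe_card] at h
  have hcard : Fintype.card G < Fintype.card (Fin (l.length + 1)) := by
    simp only [Fintype.card_fin]; omega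
  obtain ⟨x, y, hxy, hf⟩ :=
    Fintype.exists_ne_map_eq_of_card_lt (fun j : Fin (l.length + 1) => (l.take j).prod) hcard
  wlog hlt : (x : ℕ) < (y : ℕ) generalizing x y
  · exact this y x hxy.symm hf.symm
      (lt_of_le_of_ne (not_lt.mp hlt) (fun hc => hxy (Fin.ext hc.symm)))
  set seg := (l.take y).drop x with hseg
  have hy : (y : ℕ) ≤ l.length := Nat.lt_succ_iff.mp y.isLt
  have happ : l.take x ++ seg = l.take y := by
    conv_rhs => rw [← List.take_append_drop x (l.take y)]
    rw [List.take_take, Nat.min_eq_left hlt.le]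
  refine ⟨(seg : Multiset G), ?_, ?_, ?_⟩
  · exact Multiset.coe_le.mpr (((l.take ↑y).drop_sublist ↑x).trans (l.take_sublist ↑y)).subperm
  · have hlen : seg.length = (y : ℕ) - x := by
      simp [hseg, List.length_drop, List.length_take]; omega
    intro hc
    rw [Multiset.coe_eq_zero] at hc
    rw [hc] at hlen
    simp at hlen; omega
  · have := congrArg List.prod happ
    rw [List.prod_append, hf] at this
    have : seg.prod = 1 := by
      have h2 := mul_left_cancel (a := (l.take ↑y).prod) (b := seg.prod) (c := 1) ?_
      · exact h2
      · rw [mul_one]; exact this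
    simpa [Multiset.prod_coe] using this

lemma davenportG_spec (G : Type*) [CommGroup G] [Finite G] :
    0 < DavenportG G ∧ ∀ T : Multiset G, DavenportG G ≤ Multiset.card T →
      ∃ T' : Multiset G, T' ≤ T ∧ T' ≠ 0 ∧ T'.prod = 1 := by
  haveI := Fintype.ofFinite G
  have h : {d : ℕ | 0 < d ∧ ∀ T : Multiset G, d ≤ Multiset.card T →
      ∃ T' : Multiset G, T' ≤ T ∧ T' ≠ 0 ∧ T'.prod = 1}.Nonempty :=
    ⟨Fintype.card G + 1, Nat.succ_pos _, fun T hT => exists_nonempty_prod_one T (by omega)⟩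
  exact Nat.sInf_mem h

lemma prod_map_ite_count {M : Type*} [DecidableEq α] [CommMonoid M] (z : M) (a : α)
    (s : Multiset α) : (s.map fun x => if x = a then z else 1).prod = z ^ s.count a := by
  induction s using Multiset.induction with
  | empty => simp
  | cons b s ih =>
    rw [Multiset.map_cons, Multiset.prod_cons, ih, Multiset.count_cons]
    by_cases h : b = a
    · simp [h, pow_succ, mul_comm]
    · simp [h, Ne.symm h]

lemma card_finset_sum {ι : Type*} (s : Finset ι) (f : ι → Multiset α) :
    Multiset.card (∑ i ∈ s, f i) = ∑ i ∈ s, Multiset.card (f i) := by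
  induction s using Finset.cons_induction with
  | empty => simp
  | cons a s ha ih => simp [Finset.sum_cons, ih]

end DavenportAux

open Multiset

namespace DavenportAux2

open Classical in
noncomputable def unz {G : Type*} [Group G] (x : WithZero G) : G :=
  if h : x = 0 then 1 else WithZero.unzero h

lemma coe_unz {G : Type*} [Group G] {x : WithZero G} (h : x ≠ 0) :
    (↑(unz x) : WithZero G) = x := by
  rw [unz]
  rw [dif_neg h, WithZero.coe_unzero]

variable {k : ℕ} {n : Fin k → ℕ}

/-- Project an element of the product to a unit, fudging zero coordinates to 1. -/
noncomputable def projU (n : Fin k → ℕ) (t : ∀ i, WithZero (Multiplicative (ZMod (n i)))) :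
    (∀ i, WithZero (Multiplicative (ZMod (n i))))ˣ where
  val := fun i => ↑(unz (t i))
  inv := fun i => ↑((unz (t i))⁻¹)
  val_inv := by
    funext i
    show (↑(unz (t i)) : WithZero (Multiplicative (ZMod (n i)))) * ↑((unz (t i))⁻¹) = 1
    rw [← WithZero.coe_mul, mul_inv_cancel, WithZero.coe_one]
  inv_val := by
    funext i
    show (↑((unz (t i))⁻¹) : WithZero (Multiplicative (ZMod (n i)))) * ↑(unz (t i)) = 1
    rw [← WithZero.coe_mul, inv_mul_cancel, WithZero.coe_one]

lemma projU_val {t : ∀ i, WithZero (Multiplicative (ZMod (n i)))} {i : Fin k}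
    (h : t i ≠ 0) : (projU n t).val i = t i := coe_unz h

/-- The generator unit at coordinate `j`. -/
noncomputable def gen (n : Fin k → ℕ) (j : Fin k) :
    (∀ i, WithZero (Multiplicative (ZMod (n i))))ˣ where
  val := Function.update (1 : ∀ i, WithZero (Multiplicative (ZMod (n i)))) j
    (↑(Multiplicative.ofAdd (1 : ZMod (n j))))
  inv := Function.update (1 : ∀ i, WithZero (Multiplicative (ZMod (n i)))) j
    (↑((Multiplicative.ofAdd (1 : ZMod (n j)))⁻¹))
  val_inv := by
    funext i
    by_cases h : i = j
    · subst h
      simp only [Pi.mul_apply, Function.update_self]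
      show (↑(Multiplicative.ofAdd (1 : ZMod (n i))) : WithZero (Multiplicative (ZMod (n i)))) *
        ↑((Multiplicative.ofAdd (1 : ZMod (n i)))⁻¹) = 1
      rw [← WithZero.coe_mul, mul_inv_cancel, WithZero.coe_one]
    · simp only [Pi.mul_apply, Function.update_of_ne h, Pi.one_apply, one_mul]
  inv_val := by
    funext i
    by_cases h : i = j
    · subst h
      simp only [Pi.mul_apply, Function.update_self]
      show (↑((Multiplicative.ofAdd (1 : ZMod (n i)))⁻¹) : WithZero (Multiplicative (ZMod (n i)))) *
        ↑(Multiplicative.ofAdd (1 : ZMod (n i))) = 1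
      rw [← WithZero.coe_mul, inv_mul_cancel, WithZero.coe_one]
    · simp only [Pi.mul_apply, Function.update_of_ne h, Pi.one_apply, one_mul]

lemma gen_val_self (j : Fin k) :
    (gen n j).val j = (↑(Multiplicative.ofAdd (1 : ZMod (n j)))) := by
  simp [gen, Function.update_self]

lemma gen_val_ne {i j : Fin k} (h : i ≠ j) : (gen n j).val i = 1 := by
  simp [gen, Function.update_of_ne h]

lemma ofAdd_one_ne_one {j : Fin k} (hj : 2 ≤ n j) :
    (↑(Multiplicative.ofAdd (1 : ZMod (n j))) : WithZero (Multiplicative (ZMod (n j)))) ≠ 1 := by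
  haveI : NeZero (n j) := ⟨by omega⟩
  rw [← WithZero.coe_one, ne_eq, WithZero.coe_inj]
  intro hc
  have h0 : (1 : ZMod (n j)) = 0 := by
    have := congrArg Multiplicative.toAdd hc
    simpa using this
  rw [show ((1 : ZMod (n j)) = ((1 : ℕ) : ZMod (n j))) by simp] at h0
  rw [ZMod.natCast_eq_zero_iff] at h0
  have := Nat.le_of_dvd one_pos h0
  omega

lemma gen_inj (hn : ∀ i, 2 ≤ n i) {j j' : Fin k} (h : gen n j = gen n j') : j = j' := by
  by_contra hne
  apply ofAdd_one_ne_one (hn j)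
  calc (↑(Multiplicative.ofAdd (1 : ZMod (n j))) : WithZero (Multiplicative (ZMod (n j))))
      = (gen n j).val j := (gen_val_self j).symm
    _ = (gen n j').val j := by rw [h]
    _ = 1 := gen_val_ne hne

end DavenportAux2

namespace DavenportAux3

lemma prod_coord {ι : Type*} {S : ι → Type*} [∀ i, CommMonoid (S i)]
    (B : Multiset (∀ i, S i)ˣ) (j : ι) :
    (B.map (fun u => u.val j)).prod = (B.prod).val j := by
  have h1 : (B.map (Units.coeHom (∀ i, S i))).prod = ((B.prod : (∀ i, S i)ˣ) : ∀ i, S i) :=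
    Multiset.prod_hom B (Units.coeHom _)
  have h2 := Multiset.prod_hom (B.map (Units.coeHom (∀ i, S i))) (Pi.evalMonoidHom S j)
  rw [Multiset.map_map, h1] at h2
  exact h2

lemma prod_coord' {ι : Type*} {S : ι → Type*} [∀ i, CommMonoid (S i)]
    (M : Multiset (∀ i, S i)) (j : ι) :
    (M.map (fun t => t j)).prod = M.prod j :=
  Multiset.prod_hom M (Pi.evalMonoidHom S j)

end DavenportAux3

open DavenportAux DavenportAux2 DavenportAux3

/-- For `k ≥ 1` and integers `n_1, …, n_k ≥ 2`, let `S` be the direct product of the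
monoids obtained by adjoining a zero element to the cyclic groups `C_{n_i}`. Then
`D(S) = D(U(S))`, where `U(S) ≅ C_{n_1} × ⋯ × C_{n_k}` is the group of units of `S`. -/
theorem davenport_prod_withZero_cyclic (k : ℕ) (hk : 1 ≤ k) (n : Fin k → ℕ)
    (hn : ∀ i, 2 ≤ n i) :
    DavenportM (∀ i, WithZero (Multiplicative (ZMod (n i)))) =
      DavenportG (∀ i, WithZero (Multiplicative (ZMod (n i))))ˣ := by
  classical
  haveI hNZ : ∀ i, NeZero (n i) := fun i => ⟨by have := hn i; omega⟩
  haveI hFin : ∀ i : Fin k, Finite (WithZero (Multiplicative (ZMod (n i)))) := by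
    intro i; unfold WithZero; infer_instance
  haveI : Finite (∀ i, WithZero (Multiplicative (ZMod (n i)))) := by infer_instance
  obtain ⟨hpos, hprop⟩ := davenportG_spec (∀ i, WithZero (Multiplicative (ZMod (n i))))ˣ
  set d := DavenportG (∀ i, WithZero (Multiplicative (ZMod (n i))))ˣ with hd
  -- Key: every sequence over the monoid of length ≥ d is reducible.
  have key : ∀ T : Multiset (∀ i, WithZero (Multiplicative (ZMod (n i)))),
      d ≤ Multiset.card T →
      ∃ T' : Multiset (∀ i, WithZero (Multiplicative (ZMod (n i)))),
        T' ≤ T ∧ T' ≠ T ∧ T'.prod = T.prod := by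
    intro T hT
    set Z : Finset (Fin k) := Finset.univ.filter (fun i => ∃ t ∈ T, t i = 0) with hZdef
    have hZmem : ∀ i, i ∈ Z ↔ ∃ t ∈ T, t i = 0 := by intro i; simp [hZdef]
    have hwex : ∀ i ∈ Z, ∃ t, t ∈ T ∧ t i = 0 := by
      intro i hi
      obtain ⟨t, ht, h0⟩ := (hZmem i).mp hi
      exact ⟨t, ht, h0⟩
    choose w hwT hw0 using hwex
    set Wf : Finset (∀ i, WithZero (Multiplicative (ZMod (n i)))) :=
      Z.attach.image (fun i => w i.1 i.2) with hWf
    set W : Multiset (∀ i, WithZero (Multiplicative (ZMod (n i)))) := Wf.val with hWdef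
    have hWle : W ≤ T := by
      rw [Multiset.le_iff_count]
      intro x
      by_cases hx : x ∈ Wf
      · have hx1 : Multiset.count x W ≤ 1 :=
          Multiset.nodup_iff_count_le_one.mp Wf.nodup x
        have hxT : x ∈ T := by
          obtain ⟨i, _, rfl⟩ := Finset.mem_image.mp hx
          exact hwT i.1 i.2
        calc Multiset.count x W ≤ 1 := hx1
          _ ≤ Multiset.count x T := Multiset.one_le_count_iff_mem.mpr hxT
      · rw [Multiset.count_eq_zero_of_notMem (by simpa [hWdef] using hx)]
        exact Nat.zero_le _
    have hWcard : Multiset.card W ≤ Z.card := by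
      have h1 : Multiset.card W = Wf.card := rfl
      rw [h1]
      calc Wf.card ≤ Z.attach.card := Finset.card_image_le
        _ = Z.card := Finset.card_attach
    set Pad : Multiset (∀ i, WithZero (Multiplicative (ZMod (n i))))ˣ :=
      ∑ j ∈ Z, Multiset.replicate (n j - 1) (gen n j) with hPad
    have hPadcard : Z.card ≤ Multiset.card Pad := by
      rw [hPad, card_finset_sum]
      calc Z.card = ∑ _j ∈ Z, 1 := by simp
        _ ≤ ∑ j ∈ Z, Multiset.card (Multiset.replicate (n j - 1) (gen n j)) := by
            apply Finset.sum_le_sum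
            intro j hj
            rw [Multiset.card_replicate]
            have := hn j; omega
    have hPadmem : ∀ x ∈ Pad, ∃ j ∈ Z, x = gen n j := by
      intro x hx
      rw [hPad] at hx
      obtain ⟨j, hj, hxj⟩ := Multiset.mem_sum.mp hx
      exact ⟨j, hj, Multiset.eq_of_mem_replicate hxj⟩
    set R : Multiset (∀ i, WithZero (Multiplicative (ZMod (n i)))) := T - W with hRdef
    have hRcard : Multiset.card R = Multiset.card T - Multiset.card W :=
      Multiset.card_sub hWle
    set P : Multiset (∀ i, WithZero (Multiplicative (ZMod (n i))))ˣ :=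
      R.map (projU n) + Pad with hPdef
    have hPcard : d ≤ Multiset.card P := by
      rw [hPdef, Multiset.card_add, Multiset.card_map, hRcard]
      have h1 : Multiset.card W ≤ Multiset.card T := Multiset.card_le_card hWle
      omega
    obtain ⟨P', hP'le, hP'ne, hP'prod⟩ := hprop P hPcard
    rw [hPdef] at hP'le
    obtain ⟨A', B', hA'le, hB'le, rfl⟩ := split hP'le
    have hBgen : ∀ x ∈ B', ∃ j ∈ Z, x = gen n j :=
      fun x hx => hPadmem x (Multiset.mem_of_le hB'le hx)
    by_cases hA0 : A' = 0
    · -- impossible: a nonempty product-one subsequence of the padding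
      exfalso
      rw [hA0, zero_add] at hP'ne hP'prod
      obtain ⟨x, hx⟩ := Multiset.exists_mem_of_ne_zero hP'ne
      obtain ⟨j, hjZ, rfl⟩ := hBgen x hx
      set c := Multiset.count (gen n j) B' with hc
      have hc1 : 1 ≤ c := Multiset.one_le_count_iff_mem.mpr hx
      have hcle : c ≤ n j - 1 := by
        calc c ≤ Multiset.count (gen n j) Pad := Multiset.count_le_of_le _ hB'le
          _ = n j - 1 := by
            rw [hPad, Multiset.count_sum']
            rw [Finset.sum_eq_single j]
            · rw [Multiset.count_replicate, if_pos rfl]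
            · intro j' _ hne
              rw [Multiset.count_replicate,
                if_neg (fun hc' => hne (gen_inj hn hc'.symm).symm)]
            · intro h; exact absurd hjZ h
      -- evaluate the product at coordinate j
      have hcoord : (B'.map (fun u => u.val j)).prod = 1 := by
        rw [prod_coord, hP'prod]; rfl
      have hmapc : B'.map (fun u => u.val j) =
          B'.map (fun u => if u = gen n j then
            (↑(Multiplicative.ofAdd (1 : ZMod (n j))) :
              WithZero (Multiplicative (ZMod (n j)))) else 1) := by
        apply Multiset.map_congr rfl
        intro u hu
        obtain ⟨j', hj'Z, rfl⟩ := hBgen u hu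
        by_cases hjj : j' = j
        · subst hjj
          rw [if_pos rfl, gen_val_self]
        · rw [if_neg (fun hc' => hjj (gen_inj hn hc')), gen_val_ne (fun h => hjj h.symm)]
      rw [hmapc, prod_map_ite_count, ← hc] at hcoord
      -- now (↑(ofAdd 1))^c = 1 in WithZero
      have hpow : (Multiplicative.ofAdd (1 : ZMod (n j))) ^ c = 1 := by
        have : ((Multiplicative.ofAdd (1 : ZMod (n j)) ^ c : Multiplicative (ZMod (n j))) :
            WithZero (Multiplicative (ZMod (n j)))) = ((1 : Multiplicative (ZMod (n j))) :
            WithZero (Multiplicative (ZMod (n j)))) := by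
          rw [WithZero.coe_pow, WithZero.coe_one]
          exact hcoord
        exact WithZero.coe_inj.mp this
      have hadd : (c : ZMod (n j)) = 0 := by
        have := congrArg Multiplicative.toAdd hpow
        rw [toAdd_pow, toAdd_ofAdd, toAdd_one, nsmul_eq_mul, mul_one] at this
        exact this
      rw [ZMod.natCast_eq_zero_iff] at hadd
      have := Nat.le_of_dvd (by omega) hadd
      have := hn j
      omega
    · -- the main reduction
      obtain ⟨R', hR'le, hR'map⟩ := exists_le_of_le_map hA'le
      have hR'ne : R' ≠ 0 := by
        intro h0
        rw [h0, Multiset.map_zero] at hR'map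
        exact hA0 hR'map.symm
      have hR'leR : R' ≤ R := hR'le
      have hR'T : R' ≤ T := le_trans hR'leR (by rw [hRdef]; exact tsub_le_self)
      have hWR' : W + R' ≤ T := by
        have h1 : W + R' ≤ W + (T - W) := add_le_add_right (by rw [hRdef] at hR'leR; exact hR'leR) W
        rwa [add_tsub_cancel_of_le hWle] at h1
      have hWT' : W ≤ T - R' := le_tsub_of_add_le_right hWR'
      refine ⟨T - R', tsub_le_self, ?_, ?_⟩
      · have hlt : Multiset.card (T - R') < Multiset.card T := by
          rw [Multiset.card_sub hR'T]
          have h1 : 0 < Multiset.card R' := Multiset.card_pos.mpr hR'ne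
          have h2 : Multiset.card R' ≤ Multiset.card T := Multiset.card_le_card hR'T
          omega
        exact fun h => absurd (congrArg Multiset.card h) (Nat.ne_of_lt hlt)
      · have hsum : (T - R') + R' = T := tsub_add_cancel_of_le hR'T
        funext i
        by_cases hi : i ∈ Z
        · -- both products are 0 at coordinate i
          have hwiW : w i hi ∈ W := by
            rw [hWdef]
            exact Finset.mem_val.mpr
              (Finset.mem_image.mpr ⟨⟨i, hi⟩, Finset.mem_attach _ _, rfl⟩)
          have hwi : w i hi ∈ T - R' := Multiset.mem_of_le hWT' hwiW
          have h1 : (T - R').prod i = 0 := by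
            rw [← prod_coord' (T - R') i]
            exact Multiset.prod_eq_zero (Multiset.mem_map.mpr ⟨w i hi, hwi, hw0 i hi⟩)
          have h2 : T.prod i = 0 := by
            rw [← prod_coord' T i]
            exact Multiset.prod_eq_zero (Multiset.mem_map.mpr ⟨w i hi, hwT i hi, hw0 i hi⟩)
          rw [h1, h2]
        · -- coordinate i is a unit everywhere
          have hne0 : ∀ t ∈ T, t i ≠ 0 := fun t ht h0 => hi ((hZmem i).mpr ⟨t, ht, h0⟩)
          have hBval : (B'.prod).val i = 1 := by
            rw [← prod_coord]
            apply Multiset.prod_eq_one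
            intro x hx
            obtain ⟨u, hu, rfl⟩ := Multiset.mem_map.mp hx
            obtain ⟨j, hjZ, rfl⟩ := hBgen u hu
            exact gen_val_ne (fun h => hi (h ▸ hjZ))
          have hABval : (A'.prod).val i * (B'.prod).val i = 1 := by
            have h := congrArg (fun u : (∀ i', WithZero (Multiplicative (ZMod (n i'))))ˣ =>
              u.val i) hP'prod
            rw [Multiset.prod_add] at h
            simpa using h
          have hAval : (A'.prod).val i = 1 := by
            rw [hBval, mul_one] at hABval; exact hABval
          have hR'prod : R'.prod i = 1 := by
            have e1 : (R'.map (fun t => t i)).prod = R'.prod i := prod_coord' R' i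
            have e2 := prod_coord A' i
            rw [← hR'map, Multiset.map_map] at e2
            have e3 : R'.map ((fun u : (∀ i', WithZero (Multiplicative (ZMod (n i'))))ˣ =>
                u.val i) ∘ projU n) = R'.map (fun t => t i) :=
              Multiset.map_congr rfl
                (fun t ht => projU_val (hne0 t (Multiset.mem_of_le hR'T ht)))
            rw [e3, e1] at e2
            rw [e2, hR'map]
            exact hAval
          have hTsplit := congrArg Multiset.prod hsum
          rw [Multiset.prod_add] at hTsplit
          have h := congrArg (fun f => f i) hTsplit
          simp only [Pi.mul_apply] at h
          rw [hR'prod, mul_one] at h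
          exact h
  -- conclude by antisymmetry
  have hmemS : d ∈ {e : ℕ | 0 < e ∧
      ∀ T : Multiset (∀ i, WithZero (Multiplicative (ZMod (n i)))), e ≤ Multiset.card T →
      ∃ T' : Multiset (∀ i, WithZero (Multiplicative (ZMod (n i)))),
        T' ≤ T ∧ T' ≠ T ∧ T'.prod = T.prod} := ⟨hpos, key⟩
  have hDM := Nat.sInf_mem (⟨d, hmemS⟩ : Set.Nonempty _)
  apply le_antisymm
  · exact Nat.sInf_le hmemS
  · obtain ⟨hpos', hprop'⟩ := hDM
    apply Nat.sInf_le
    refine ⟨hpos', ?_⟩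
    intro T hT
    have hT2 : DavenportM (∀ i, WithZero (Multiplicative (ZMod (n i)))) ≤
        Multiset.card (T.map Units.val) := by rwa [Multiset.card_map]
    obtain ⟨T'', hle, hne, hprodEq⟩ := hprop' (T.map Units.val) hT2
    obtain ⟨T₀, hT₀le, rfl⟩ := exists_le_of_le_map hle
    have hT₀ne : T₀ ≠ T := fun h => hne (by rw [h])
    refine ⟨T - T₀, tsub_le_self, ?_, ?_⟩
    · have hlt : Multiset.card T₀ < Multiset.card T :=
        Multiset.card_lt_card (lt_of_le_of_ne hT₀le hT₀ne)
      have hcs : Multiset.card (T - T₀) = Multiset.card T - Multiset.card T₀ :=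
        Multiset.card_sub hT₀le
      intro h0
      rw [h0] at hcs
      simp at hcs
      omega
    · have hprodU : T₀.prod = T.prod := by
        apply Units.ext
        have h1 : (T₀.map Units.val).prod = (T₀.prod).val :=
          Multiset.prod_hom T₀ (Units.coeHom _)
        have h2 : (T.map Units.val).prod = (T.prod).val :=
          Multiset.prod_hom T (Units.coeHom _)
        rw [h1, h2] at hprodEq
        exact hprodEq
      have hsum : (T - T₀) + T₀ = T := tsub_add_cancel_of_le hT₀le
      have h := congrArg Multiset.prod hsum
      rw [Multiset.prod_add, hprodU] at h
      have h2 : (T - T₀).prod * T.prod = 1 * T.prod := by rw [h, one_mul]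
      exact mul_right_cancel h2
end

section
/- Let p > 2 be a prime, and let S denote the multiplicative monoid of the quotient ring 𝔽_p[X]/⟨(X+1)²⟩. Then D(S) = D(U(S)), where U(S) is the group of units of S. -/
section Aux
open Polynomial

-- lift a multiset of units
lemma exists_units_multiset {M : Type*} [CommMonoid M] (T : Multiset M)
    (h : ∀ x ∈ T, IsUnit x) : ∃ U : Multiset Mˣ, U.map Units.val = T := by
  induction T using Multiset.induction_on with
  | empty => exact ⟨0, rfl⟩
  | cons a s ih =>
    obtain ⟨U, hU⟩ := ih fun x hx => h x (Multiset.mem_cons_of_mem hx)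
    obtain ⟨u, hu⟩ := h a (Multiset.mem_cons_self a s)
    exact ⟨u ::ₘ U, by simp [hU, hu]⟩

lemma exists_of_le_map' {α β : Type*} {f : α → β} (t : Multiset α) :
    ∀ (s : Multiset β), s ≤ t.map f → ∃ s', s' ≤ t ∧ s'.map f = s := by
  classical
  induction t using Multiset.induction_on with
  | empty => intro s hs; simp only [Multiset.map_zero, Multiset.le_zero] at hs
             exact ⟨0, le_rfl, by simp [hs]⟩
  | cons a t ih =>
    intro s hs
    rw [Multiset.map_cons] at hs
    by_cases hm : f a ∈ s
    · have h1 : s.erase (f a) ≤ t.map f := by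
        rw [Multiset.erase_le_iff_le_cons]; exact hs
      obtain ⟨s', h1, h2⟩ := ih _ h1
      refine ⟨a ::ₘ s', Multiset.cons_le_cons _ h1, ?_⟩
      rw [Multiset.map_cons, h2, Multiset.cons_erase hm]
    · have h1 : s ≤ t.map f := by
        rw [Multiset.le_iff_count] at hs ⊢
        intro b
        have := hs b
        rcases eq_or_ne b (f a) with rfl | hb
        · simpa [Multiset.count_eq_zero_of_notMem hm] using Nat.zero_le _
        · simpa [Multiset.count_cons, hb] using this
      obtain ⟨s', h1, h2⟩ := ih _ h1
      exact ⟨s', le_trans h1 (Multiset.le_cons_self _ _), h2⟩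

lemma davenport_le_card {H : Type*} [CommGroup H] [Fintype H] (T : Multiset H)
    (h : Fintype.card H ≤ Multiset.card T) :
    ∃ V, V ≤ T ∧ V ≠ 0 ∧ V.prod = 1 := by
  set n := Fintype.card H with hn
  set l := T.toList with hl
  have hlen : l.length = Multiset.card T := Multiset.length_toList T
  have hni : ¬ Function.Injective (fun i : Fin (n+1) => ((l.take i).prod : H)) := by
    intro hinj
    have := Fintype.card_le_of_injective _ hinj
    simp only [Fintype.card_fin, ← hn] at this
    omega
  rw [Function.not_injective_iff] at hni
  obtain ⟨i, j, hij, hne⟩ := hni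
  wlog hlt : (i : ℕ) < (j : ℕ) generalizing i j
  · have hji : (j : ℕ) < (i : ℕ) := by
      have h2 : (i : ℕ) ≠ (j : ℕ) := fun hc => hne (Fin.ext hc)
      omega
    exact this j i hij.symm (Ne.symm hne) hji
  set V : List H := (l.take j).drop i with hV
  have hjl : (j : ℕ) ≤ l.length := by
    have := j.isLt; omega
  have hsplit : l.take j = l.take i ++ V := by
    conv_lhs => rw [← List.take_append_drop (i : ℕ) (l.take j)]
    rw [List.take_take, min_eq_left (le_of_lt hlt)]
  have hprod : (l.take i).prod * V.prod = (l.take j).prod := by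
    rw [hsplit, List.prod_append]
  have hVprod : V.prod = 1 := by
    have : (l.take i).prod = (l.take j).prod := hij
    rw [← this] at hprod
    exact mul_left_cancel (by rw [hprod, mul_one])
  have hVne : V ≠ [] := by
    have : V.length = (j : ℕ) - i := by
      rw [hV, List.length_drop, List.length_take, min_eq_left hjl]
    intro hnil
    rw [hnil] at this
    simp at this
    omega
  refine ⟨(V : Multiset H), ?_, by simpa using hVne, by simpa using hVprod⟩
  have hsub : List.Sublist V l := (List.drop_sublist ..).trans (List.take_sublist ..)
  calc (V : Multiset H) ≤ (l : Multiset H) := Multiset.coe_le.2 hsub.subperm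
    _ = T := Multiset.coe_toList T

section Ring
variable (p : ℕ) [Fact p.Prime]

local notation "Rp" => Polynomial (ZMod p)
local notation "Ip" => (Ideal.span {((X : Polynomial (ZMod p)) + 1) ^ 2})
local notation "Sp" => (Polynomial (ZMod p) ⧸ Ideal.span {((X : Polynomial (ZMod p)) + 1) ^ 2})
local notation "mkp" => Ideal.Quotient.mk (Ideal.span {((X : Polynomial (ZMod p)) + 1) ^ 2})

lemma X_add_one_eq : ((X : Rp) + 1) = X - C (-1) := by
  rw [map_neg, map_one, sub_neg_eq_add]

lemma mk_eq_zero_iff (f : Rp) : mkp f = 0 ↔ ((X : Rp) + 1) ^ 2 ∣ f := by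
  rw [Ideal.Quotient.eq_zero_iff_mem, Ideal.mem_span_singleton]

noncomputable def phip : Sp →+* ZMod p :=
  Ideal.Quotient.lift _ (Polynomial.evalRingHom (-1)) (by
    intro f hf
    rw [Ideal.mem_span_singleton] at hf
    obtain ⟨g, rfl⟩ := hf
    simp)

@[simp] lemma phip_mk (f : Rp) : phip p (mkp f) = f.eval (-1) := rfl

lemma isUnit_iff_phip (s : Sp) : IsUnit s ↔ phip p s ≠ 0 := by
  constructor
  · intro hs h0
    have := hs.map (phip p)
    rw [h0] at this
    exact (not_isUnit_zero : ¬ IsUnit (0 : ZMod p)) this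
  · intro h0
    obtain ⟨f, rfl⟩ := Ideal.Quotient.mk_surjective s
    have hnd : ¬ ((X : Rp) + 1) ∣ f := by
      intro hdvd
      rw [X_add_one_eq, Polynomial.dvd_iff_isRoot] at hdvd
      simp [Polynomial.IsRoot] at hdvd
      simp [hdvd] at h0
    have hcop : IsCoprime f (((X : Rp) + 1) ^ 2) := by
      refine Irreducible.coprime_pow_of_not_dvd 2 ?_ hnd
      rw [X_add_one_eq]
      exact Polynomial.irreducible_X_sub_C (-1)
    obtain ⟨u, v, huv⟩ := hcop
    have : mkp u * mkp f = 1 := by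
      have := congrArg mkp huv
      simp only [map_add, map_mul, map_one] at this
      rw [(mk_eq_zero_iff p _).2 dvd_rfl] at this
      simpa using this
    exact IsUnit.of_mul_eq_one _ (mul_comm (mkp u) (mkp f) ▸ this)

lemma eq_pi_mul_of_phip_eq_zero (s : Sp) (h : phip p s = 0) :
    ∃ t : Sp, s = mkp ((X : Rp) + 1) * t := by
  obtain ⟨f, rfl⟩ := Ideal.Quotient.mk_surjective s
  rw [phip_mk] at h
  have : ((X : Rp) + 1) ∣ f := by
    rw [X_add_one_eq, Polynomial.dvd_iff_isRoot]
    simpa [Polynomial.IsRoot] using h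
  obtain ⟨g, rfl⟩ := this
  exact ⟨mkp g, by rw [map_mul]⟩

lemma pi_sq : (mkp ((X : Rp) + 1)) ^ 2 = 0 := by
  rw [← map_pow, mk_eq_zero_iff]

lemma nonunit_mul (a : Sp) (ha : ¬ IsUnit a) (s : Sp) :
    a * s = a * mkp (C (phip p s)) := by
  have ha0 : phip p a = 0 := by
    by_contra h; exact ha ((isUnit_iff_phip p a).2 h)
  obtain ⟨t, rfl⟩ := eq_pi_mul_of_phip_eq_zero p a ha0
  have hs0 : phip p (s - mkp (C (phip p s))) = 0 := by
    simp
  obtain ⟨t2, ht2⟩ := eq_pi_mul_of_phip_eq_zero p _ hs0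
  have : mkp ((X:Rp)+1) * t * (s - mkp (C (phip p s))) = 0 := by
    rw [ht2]
    have : mkp ((X:Rp)+1) * t * (mkp ((X:Rp)+1) * t2)
        = (mkp ((X:Rp)+1))^2 * (t * t2) := by ring
    rw [this, pi_sq, zero_mul]
  have h2 : mkp ((X:Rp)+1) * t * s - mkp ((X:Rp)+1) * t * mkp (C (phip p s)) = 0 := by
    rw [← mul_sub]; exact this
  exact sub_eq_zero.1 h2

end Ring

section Ring2
variable (p : ℕ) [Fact p.Prime]

local notation "Rp" => Polynomial (ZMod p)
local notation "Sp" => (Polynomial (ZMod p) ⧸ Ideal.span {((X : Polynomial (ZMod p)) + 1) ^ 2})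
local notation "mkp" => Ideal.Quotient.mk (Ideal.span {((X : Polynomial (ZMod p)) + 1) ^ 2})

lemma Cpi_ne_zero (c : ZMod p) (hc : c ≠ 0) : mkp (C c) * mkp ((X : Rp) + 1) ≠ 0 := by
  intro h0
  rw [← map_mul, mk_eq_zero_iff] at h0
  revert h0
  intro hdvd
  have hne : C c * ((X : Rp) + 1) ≠ 0 := by
    apply mul_ne_zero
    · simpa using hc
    · rw [X_add_one_eq p]
      exact Polynomial.X_sub_C_ne_zero _
  have hdeg := Polynomial.degree_le_of_dvd hdvd hne
  have h1 : (((X : Rp) + 1) ^ 2).degree = 2 := by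
    rw [X_add_one_eq p, Polynomial.degree_pow, Polynomial.degree_X_sub_C]
    rfl
  have h2 : (C c * ((X : Rp) + 1)).degree = 1 := by
    rw [Polynomial.degree_mul, Polynomial.degree_C hc, X_add_one_eq,
      Polynomial.degree_X_sub_C]
    rfl
  rw [h1, h2] at hdeg
  norm_num at hdeg

lemma pi_ne_zero : mkp ((X : Rp) + 1) ≠ 0 := by
  have := Cpi_ne_zero p 1 one_ne_zero
  simpa using this

lemma one_add_pi_pow (k : ℕ) :
    (1 + mkp ((X : Rp) + 1)) ^ k = 1 + mkp (C (k : ZMod p)) * mkp ((X : Rp) + 1) := by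
  induction k with
  | zero => simp
  | succ k ih =>
    have hstep : (1 + mkp ((X : Rp) + 1)) ^ (k+1)
        = (1 + mkp ((X : Rp) + 1)) ^ k * (1 + mkp ((X : Rp) + 1)) := pow_succ _ _
    rw [hstep, ih]
    have hsq : mkp ((X:Rp)+1) * mkp ((X:Rp)+1) = 0 := by
      rw [← map_mul, mk_eq_zero_iff]
      exact ⟨1, by ring⟩
    have hcast : (mkp (C ((k+1 : ℕ) : ZMod p))) = mkp (C ((k : ℕ) : ZMod p)) + 1 := by
      push_cast
      simp [map_add]
    rw [hcast]
    have h0 : mkp (C ((k:ℕ) : ZMod p)) * (mkp ((X:Rp)+1) * mkp ((X:Rp)+1)) = 0 := by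
      rw [hsq, mul_zero]
    linear_combination h0

lemma isUnit_one_add_pi : IsUnit (1 + mkp ((X : Rp) + 1)) := by
  rw [isUnit_iff_phip]
  simp

lemma finite_Sp : Finite Sp := by
  have hsurj : Function.Surjective (fun ab : ZMod p × ZMod p => mkp (C ab.1 * X + C ab.2)) := by
    intro s
    obtain ⟨f, rfl⟩ := Ideal.Quotient.mk_surjective s
    have hmonic : (((X : Rp) + 1) ^ 2).Monic := by
      have : ((X : Rp) + 1).Monic := by
        simpa using Polynomial.monic_X_add_C (1 : ZMod p)
      exact this.pow 2
    set r := f %ₘ (((X : Rp) + 1) ^ 2) with hr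
    have hdeg2 : (((X : Rp) + 1) ^ 2).degree = 2 := by
      rw [X_add_one_eq p, Polynomial.degree_pow, Polynomial.degree_X_sub_C]
      rfl
    have hdeg : r.degree < 2 := by
      have := Polynomial.degree_modByMonic_lt f hmonic
      rwa [hdeg2] at this
    have hmk : mkp f = mkp r := by
      have := Polynomial.modByMonic_add_div f (((X : Rp) + 1) ^ 2)
      have h2 : f - r = ((X : Rp) + 1)^2 * (f /ₘ (((X : Rp) + 1) ^ 2)) := by
        rw [hr]; linear_combination -this
      rw [Ideal.Quotient.eq, h2]
      exact Ideal.mem_span_singleton.2 ⟨_, rfl⟩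
    refine ⟨(r.coeff 1, r.coeff 0), ?_⟩
    have hre : r = C (r.coeff 1) * X + C (r.coeff 0) := by
      apply Polynomial.eq_X_add_C_of_degree_le_one
      exact Order.le_of_lt_succ (by exact_mod_cast hdeg)
    show mkp (C (r.coeff 1) * X + C (r.coeff 0)) = mkp f
    rw [hmk]
    exact congrArg _ hre.symm
  exact Finite.of_surjective _ hsurj

end Ring2

section Main
variable (p : ℕ) [Fact p.Prime]

local notation "Rp" => Polynomial (ZMod p)
local notation "Sp" => (Polynomial (ZMod p) ⧸ Ideal.span {((X : Polynomial (ZMod p)) + 1) ^ 2})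
local notation "mkp" => Ideal.Quotient.mk (Ideal.span {((X : Polynomial (ZMod p)) + 1) ^ 2})

lemma lower_bound (hp : 2 < p) (e : ℕ)
    (he : ∀ T : Multiset Spˣ, e ≤ Multiset.card T →
      ∃ T' : Multiset Spˣ, T' ≤ T ∧ T' ≠ 0 ∧ T'.prod = 1) : p ≤ e := by
  by_contra hlt
  push_neg at hlt
  obtain ⟨u, hu⟩ := isUnit_one_add_pi p
  obtain ⟨V, hVle, hVne, hVprod⟩ := he (Multiset.replicate (p-1) u)
    (by rw [Multiset.card_replicate]; omega)
  obtain ⟨k, hkle, rfl⟩ := Multiset.le_replicate_iff.1 (by exact hVle)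
  have hk0 : k ≠ 0 := by
    intro h; rw [h] at hVne; exact hVne rfl
  have hVp : u ^ k = 1 := by rwa [Multiset.prod_replicate] at hVprod
  have hpow : ((u : Sp)) ^ k = 1 := by
    have := congrArg (Units.val) hVp
    simpa using this
  rw [hu, one_add_pi_pow] at hpow
  have hCpi : mkp (C ((k : ℕ) : ZMod p)) * mkp ((X : Rp) + 1) = 0 := by
    have := sub_eq_zero.2 hpow
    simpa using this
  have : ((k : ℕ) : ZMod p) ≠ 0 := by
    rw [Ne, ZMod.natCast_eq_zero_iff]
    intro hdvd
    have := Nat.le_of_dvd (Nat.pos_of_ne_zero hk0) hdvd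
    omega
  exact Cpi_ne_zero p _ this hCpi

lemma setS_subset (e : ℕ)
    (he : ∀ T : Multiset Sp, e ≤ Multiset.card T →
      ∃ T' : Multiset Sp, T' ≤ T ∧ T' ≠ T ∧ T'.prod = T.prod)
    (T : Multiset Spˣ) (hT : e ≤ Multiset.card T) :
    ∃ T' : Multiset Spˣ, T' ≤ T ∧ T' ≠ 0 ∧ T'.prod = 1 := by
  classical
  obtain ⟨T'', hle, hne, hprod⟩ := he (T.map Units.val) (by rwa [Multiset.card_map])
  obtain ⟨V, hVle, hVmap⟩ := exists_of_le_map' T T'' hle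
  have hVneT : V ≠ T := by rintro rfl; exact hne hVmap.symm
  have hVlt : Multiset.card V < Multiset.card T :=
    Multiset.card_lt_card (lt_of_le_of_ne hVle hVneT)
  refine ⟨T - V, tsub_le_self, ?_, ?_⟩
  · intro h0
    have := Multiset.card_sub hVle
    rw [h0] at this
    simp at this
    omega
  · have hprodV : V.prod = T.prod := by
      apply Units.ext
      have h1 : ((V.prod : Spˣ) : Sp) = (V.map Units.val).prod :=
        (Multiset.prod_hom V (Units.coeHom _)).symm
      have h2 : ((T.prod : Spˣ) : Sp) = (T.map Units.val).prod :=
        (Multiset.prod_hom T (Units.coeHom _)).symm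
      rw [h1, h2, hVmap, hprod]
    have hsplit : (T - V) + V = T := tsub_add_cancel_of_le hVle
    have : (T - V).prod * V.prod = T.prod := by
      rw [← Multiset.prod_add, hsplit]
    rw [hprodV] at this
    have h3 : (T - V).prod * T.prod = 1 * T.prod := by rw [this, one_mul]
    exact mul_right_cancel h3

lemma mem_setS (hp : 2 < p) (d : ℕ) (hpd : p ≤ d)
    (hdG : ∀ T : Multiset Spˣ, d ≤ Multiset.card T →
      ∃ T' : Multiset Spˣ, T' ≤ T ∧ T' ≠ 0 ∧ T'.prod = 1)
    (T : Multiset Sp) (hT : d ≤ Multiset.card T) :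
    ∃ T' : Multiset Sp, T' ≤ T ∧ T' ≠ T ∧ T'.prod = T.prod := by
  classical
  obtain ⟨A, hA⟩ : ∃ A, A = T.filter (fun x => ¬ IsUnit x) := ⟨_, rfl⟩
  obtain ⟨U, hU⟩ : ∃ U, U = T.filter (fun x => IsUnit x) := ⟨_, rfl⟩
  have hTAU : U + A = T := by rw [hU, hA]; exact Multiset.filter_add_not _ T
  have hUunit : ∀ x ∈ U, IsUnit x := by
    intro x hx
    rw [hU] at hx
    exact Multiset.of_mem_filter (p := fun x => IsUnit x) hx
  rcases Nat.lt_or_ge (Multiset.card A) 2 with hAc | hAc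
  · rcases Nat.lt_or_ge (Multiset.card A) 1 with hAc0 | hAc1
    · -- card A = 0 : all units
      have hA0 : A = 0 := Multiset.card_eq_zero.1 (by omega)
      have hTU : T = U := by rw [← hTAU, hA0, add_zero]
      obtain ⟨𝒯, h𝒯⟩ := exists_units_multiset T (by rw [hTU]; exact hUunit)
      obtain ⟨V, hVle, hVne, hVprod⟩ := hdG 𝒯 (by rw [← h𝒯] at hT; rwa [Multiset.card_map] at hT)
      set Vv := V.map Units.val with hVv
      have hVvT : Vv ≤ T := by rw [← h𝒯]; exact Multiset.map_le_map hVle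
      have hVvcard : 0 < Multiset.card Vv := by
        rw [hVv, Multiset.card_map]
        exact Multiset.card_pos.2 hVne
      refine ⟨T - Vv, tsub_le_self, ?_, ?_⟩
      · intro h0
        have hcs := Multiset.card_sub hVvT
        rw [h0] at hcs
        have := Multiset.card_le_card hVvT
        omega
      · have hVvprod : Vv.prod = 1 := by
          rw [hVv]
          have := Multiset.prod_hom V (Units.coeHom _)
          rw [show (Multiset.map (⇑(Units.coeHom _)) V) = Multiset.map Units.val V from rfl] at this
          rw [this, hVprod]
          rfl
        have hsplit : (T - Vv) + Vv = T := tsub_add_cancel_of_le hVvT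
        calc (T - Vv).prod = (T - Vv).prod * Vv.prod := by rw [hVvprod, mul_one]
          _ = T.prod := by rw [← Multiset.prod_add, hsplit]
    · -- card A = 1
      have hA1 : Multiset.card A = 1 := by omega
      obtain ⟨a, hAa⟩ := Multiset.card_eq_one.1 hA1
      have haA : a ∈ A := by rw [hAa]; exact Multiset.mem_singleton_self a
      have hna : ¬ IsUnit a := by
        have h' : a ∈ T.filter (fun x => ¬ IsUnit x) := by rw [← hA]; exact haA
        exact Multiset.of_mem_filter (p := fun x => ¬ IsUnit x) h'
      have hTa : T = a ::ₘ U := by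
        have h'' : U + ({a} : Multiset _) = a ::ₘ U :=
          (add_comm U {a}).trans (Multiset.singleton_add a U)
        rw [← hTAU, hAa, h'']
      obtain ⟨𝒰, h𝒰⟩ := exists_units_multiset U hUunit
      have hUcard : d - 1 ≤ Multiset.card U := by
        have := congrArg Multiset.card hTa
        rw [Multiset.card_cons] at this
        omega
      set ψ : Spˣ →* (ZMod p)ˣ := Units.map (phip p).toMonoidHom with hψdef
      obtain ⟨W', hW'le, hW'ne, hW'prod⟩ := davenport_le_card (𝒰.map ψ) (by
        rw [Multiset.card_map, ZMod.card_units]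
        have hc : Multiset.card 𝒰 = Multiset.card U := by
          have := congrArg Multiset.card h𝒰
          rwa [Multiset.card_map] at this
        omega)
      obtain ⟨V, hVle, hVmap⟩ := exists_of_le_map' 𝒰 W' hW'le
      have hVne : V ≠ 0 := by
        rintro rfl
        rw [Multiset.map_zero] at hVmap
        exact hW'ne hVmap.symm
      set Vv := V.map Units.val with hVv
      have hVvU : Vv ≤ U := by rw [← h𝒰]; exact Multiset.map_le_map hVle
      have hφ1 : phip p Vv.prod = 1 := by
        have h1 : Vv.prod = ((V.prod : Spˣ) : Sp) := by
          rw [hVv]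
          exact (Multiset.prod_hom V (Units.coeHom _))
        have h2 : ψ V.prod = 1 := by
          rw [← Multiset.prod_hom V ψ, hVmap, hW'prod]
        rw [h1]
        have := congrArg Units.val h2
        simpa [hψdef] using this
      refine ⟨a ::ₘ (U - Vv), ?_, ?_, ?_⟩
      · rw [hTa]
        exact Multiset.cons_le_cons a tsub_le_self
      · intro h0
        have := congrArg Multiset.card h0
        rw [hTa, Multiset.card_cons, Multiset.card_cons, Multiset.card_sub hVvU] at this
        have h1 := Multiset.card_le_card hVvU
        have h2 : 0 < Multiset.card Vv := by
          rw [hVv, Multiset.card_map]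
          exact Multiset.card_pos.2 hVne
        omega
      · have hsplit : (U - Vv) + Vv = U := tsub_add_cancel_of_le hVvU
        have hU' : U.prod = (U - Vv).prod * Vv.prod := by
          conv_lhs => rw [← hsplit]
          rw [Multiset.prod_add]
        rw [hTa, Multiset.prod_cons, Multiset.prod_cons, hU']
        rw [nonunit_mul p a hna ((U - Vv).prod * Vv.prod), nonunit_mul p a hna ((U - Vv).prod)]
        rw [map_mul, hφ1, mul_one]
  · -- card A ≥ 2
    obtain ⟨a, ha⟩ := Multiset.card_pos_iff_exists_mem.1 (by omega : 0 < Multiset.card A)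
    obtain ⟨A₁, hA₁⟩ := Multiset.exists_cons_of_mem ha
    have hcA₁ : 0 < Multiset.card A₁ := by
      have := congrArg Multiset.card hA₁
      rw [Multiset.card_cons] at this
      omega
    obtain ⟨b, hb⟩ := Multiset.card_pos_iff_exists_mem.1 hcA₁
    obtain ⟨A₂, hA₂⟩ := Multiset.exists_cons_of_mem hb
    have hbA : b ∈ A := by rw [hA₁]; exact Multiset.mem_cons_of_mem hb
    have hna : ¬ IsUnit a := by
      have h' : a ∈ T.filter (fun x => ¬ IsUnit x) := by rw [← hA]; exact ha
      exact Multiset.of_mem_filter (p := fun x => ¬ IsUnit x) h'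
    have hnb : ¬ IsUnit b := by
      have h' : b ∈ T.filter (fun x => ¬ IsUnit x) := by rw [← hA]; exact hbA
      exact Multiset.of_mem_filter (p := fun x => ¬ IsUnit x) h'
    have habA : (a ::ₘ b ::ₘ 0 : Multiset Sp) ≤ A := by
      rw [hA₁, hA₂]
      exact Multiset.cons_le_cons a (Multiset.cons_le_cons b (Multiset.zero_le A₂))
    have habT : (a ::ₘ b ::ₘ 0 : Multiset Sp) ≤ T := le_trans habA (by rw [hA]; exact Multiset.filter_le _ T)
    have hb0 : phip p b = 0 := by
      by_contra h; exact hnb ((isUnit_iff_phip p b).2 h)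
    have hab0 : a * b = 0 := by
      rw [nonunit_mul p a hna b, hb0, map_zero, map_zero, mul_zero]
    obtain ⟨W, hW⟩ := Multiset.le_iff_exists_add.1 habT
    refine ⟨a ::ₘ b ::ₘ 0, habT, ?_, ?_⟩
    · intro h0
      have := congrArg Multiset.card h0
      simp only [Multiset.card_cons, Multiset.card_zero] at this
      omega
    · rw [hW, Multiset.prod_add]
      rw [Multiset.prod_cons, Multiset.prod_cons, Multiset.prod_zero, mul_one, hab0, zero_mul]

end Main

section Final
variable (p : ℕ) [Fact p.Prime]

local notation "Sp" => (Polynomial (ZMod p) ⧸ Ideal.span {((X : Polynomial (ZMod p)) + 1) ^ 2})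

lemma davenport_aux (hp : 2 < p) : DavenportM Sp = DavenportG Spˣ := by
  classical
  have hfin : Finite Sp := finite_Sp p
  have hfinU : Finite Spˣ := inferInstance
  let fU : Fintype Spˣ := Fintype.ofFinite _
  set setG := {d : ℕ | 0 < d ∧ ∀ T : Multiset Spˣ, d ≤ Multiset.card T →
    ∃ T' : Multiset Spˣ, T' ≤ T ∧ T' ≠ 0 ∧ T'.prod = 1} with hsetG
  set setS := {d : ℕ | 0 < d ∧ ∀ T : Multiset Sp, d ≤ Multiset.card T →
    ∃ T' : Multiset Sp, T' ≤ T ∧ T' ≠ T ∧ T'.prod = T.prod} with hsetS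
  have hDG : DavenportG Spˣ = sInf setG := rfl
  have hDM : DavenportM Sp = sInf setS := rfl
  have hG1 : Fintype.card Spˣ ∈ setG := by
    rw [hsetG]
    exact ⟨Fintype.card_pos, fun T hT => davenport_le_card T hT⟩
  have hGne : setG.Nonempty := ⟨_, hG1⟩
  have hdmem : DavenportG Spˣ ∈ setG := by rw [hDG]; exact Nat.sInf_mem hGne
  have hdmem' := hdmem
  rw [hsetG] at hdmem'
  have hpled : p ≤ DavenportG Spˣ := by
    rw [hDG]
    exact le_csInf hGne (fun e he => lower_bound p hp e (by rw [hsetG] at he; exact he.2))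
  have hdS : DavenportG Spˣ ∈ setS := by
    rw [hsetS]
    exact ⟨lt_of_lt_of_le (by omega) hpled,
      fun T hT => mem_setS p hp _ hpled hdmem'.2 T hT⟩
  have h1 : DavenportM Sp ≤ DavenportG Spˣ := by
    rw [hDM]
    exact Nat.sInf_le hdS
  have hmm : DavenportM Sp ∈ setS := by rw [hDM]; exact Nat.sInf_mem ⟨_, hdS⟩
  have hmm' := hmm
  rw [hsetS] at hmm'
  have h2 : DavenportG Spˣ ≤ DavenportM Sp := by
    rw [hDG]
    refine Nat.sInf_le ?_
    rw [hsetG]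
    exact ⟨hmm'.1, fun T hT => setS_subset p _ hmm'.2 T hT⟩
  exact le_antisymm h1 h2

end Final


end Aux

open Polynomial in
/-- For a prime `p > 2`, the Davenport constant of the multiplicative monoid of
`𝔽_p[X]/⟨(X+1)²⟩` equals the Davenport constant of its group of units. -/
theorem davenport_quotient_sq (p : ℕ) [Fact p.Prime] (hp : 2 < p) :
    DavenportM (Polynomial (ZMod p) ⧸ Ideal.span {((X : Polynomial (ZMod p)) + 1) ^ 2}) =
      DavenportG (Polynomial (ZMod p) ⧸ Ideal.span {((X : Polynomial (ZMod p)) + 1) ^ 2})ˣ :=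
  davenport_aux p hp
end

section
/- Let G be a finite abelian group and let T be a zero-sum free sequence of elements of G of length D(G) − 1. Then every non-identity element of G is the product of the terms of some nonempty subsequence of T; that is, the set of subsequence products of T equals G \ {1}. -/
lemma pigeon_list {G : Type*} [CommGroup G] [Fintype G] (l : List G)
    (h : Fintype.card G ≤ l.length) :
    ∃ l' : List G, l'.Sublist l ∧ l' ≠ [] ∧ l'.prod = 1 := by
  have hcard : Fintype.card G < Fintype.card (Fin (l.length + 1)) := by
    simpa using Nat.lt_succ_of_le h
  obtain ⟨a, b, hab, hfab⟩ := Fintype.exists_ne_map_eq_of_card_lt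
    (fun i : Fin (l.length + 1) => (l.take i).prod) hcard
  have hne : (a : ℕ) ≠ b := fun h' => hab (Fin.ext h')
  obtain ⟨i, j, hij, hprod⟩ : ∃ i j : Fin (l.length + 1), (i : ℕ) < j ∧
      (l.take i).prod = (l.take j).prod := by
    rcases hne.lt_or_gt with h' | h'
    · exact ⟨a, b, h', hfab⟩
    · exact ⟨b, a, h', hfab.symm⟩
  refine ⟨(l.drop i).take ((j:ℕ) - i), ?_, ?_, ?_⟩
  · exact ((l.drop i).take_sublist _).trans (l.drop_sublist _)
  · have hj : (j : ℕ) ≤ l.length := Nat.lt_succ_iff.mp j.isLt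
    have hlen : ((l.drop i).take ((j:ℕ) - i)).length = min ((j:ℕ) - i) (l.length - i) := by
      simp [List.length_take, List.length_drop]
    intro hnil
    rw [hnil] at hlen
    simp only [List.length_nil] at hlen
    omega
  · have hsplit : l.take ((i:ℕ) + ((j:ℕ) - i)) = l.take i ++ (l.drop i).take ((j:ℕ) - i) :=
      List.take_add
    have hji : (j : ℕ) = (i:ℕ) + ((j:ℕ) - i) := by omega
    rw [hji, hsplit, List.prod_append] at hprod
    exact (mul_left_cancel (a := (l.take i).prod) (by simpa using hprod.symm)).symm

lemma pigeon_multiset {G : Type*} [CommGroup G] [Fintype G] (T : Multiset G)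
    (h : Fintype.card G ≤ Multiset.card T) :
    ∃ T' : Multiset G, T' ≤ T ∧ T' ≠ 0 ∧ T'.prod = 1 := by
  induction T using Quotient.inductionOn with
  | h l =>
    obtain ⟨l', hsub, hne, hprod⟩ := pigeon_list l (by simpa using h)
    exact ⟨(l' : Multiset G), by simpa [Multiset.coe_le] using hsub.subperm,
      by simpa using hne, by simpa using hprod⟩

lemma davenport_mem (G : Type*) [CommGroup G] [Fintype G] :
    0 < DavenportG G ∧ ∀ T : Multiset G, DavenportG G ≤ Multiset.card T →
      ∃ T' : Multiset G, T' ≤ T ∧ T' ≠ 0 ∧ T'.prod = 1 := by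
  have hne : {d : ℕ | 0 < d ∧ ∀ T : Multiset G, d ≤ Multiset.card T →
      ∃ T' : Multiset G, T' ≤ T ∧ T' ≠ 0 ∧ T'.prod = 1}.Nonempty :=
    ⟨Fintype.card G, Fintype.card_pos, fun T h => pigeon_multiset T h⟩
  exact Nat.sInf_mem hne

/-- If `T` is a product-one free (zero-sum free) sequence over a finite abelian group `G`
of length `D(G) - 1`, then the set of products of nonempty subsequences of `T` is exactly
`G \\ {1}`. -/
theorem subseq_prods_of_maximal_zsf (G : Type*) [CommGroup G] [Fintype G]
    (T : Multiset G) (hT : Multiset.card T = DavenportG G - 1)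
    (hfree : ∀ T' : Multiset G, T' ≤ T → T' ≠ 0 → T'.prod ≠ 1) :
    {g : G | ∃ T' : Multiset G, T' ≤ T ∧ T' ≠ 0 ∧ T'.prod = g} = {(1 : G)}ᶜ := by
  classical
  obtain ⟨hpos, hprop⟩ := davenport_mem G
  ext g
  simp only [Set.mem_setOf_eq, Set.mem_compl_iff, Set.mem_singleton_iff]
  constructor
  · rintro ⟨T', h1, h2, rfl⟩
    exact hfree T' h1 h2
  · intro hg
    have hcard : DavenportG G ≤ Multiset.card (g⁻¹ ::ₘ T) := by
      rw [Multiset.card_cons, hT]; omega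
    obtain ⟨T', hle, hne, hprod⟩ := hprop _ hcard
    by_cases hmem : g⁻¹ ∈ T'
    · refine ⟨T'.erase g⁻¹, ?_, ?_, ?_⟩
      · have := Multiset.erase_le_erase (g⁻¹) hle
        simpa using this
      · intro h0
        have hT' : T' = {g⁻¹} := by
          have := Multiset.cons_erase hmem
          rw [h0] at this
          simpa using this.symm
        rw [hT', Multiset.prod_singleton] at hprod
        exact hg (inv_eq_one.mp hprod)
      · have h1 : T' = g⁻¹ ::ₘ T'.erase g⁻¹ := (Multiset.cons_erase hmem).symm
        rw [h1, Multiset.prod_cons] at hprod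
        exact (inv_mul_eq_one.mp hprod).symm
    · exfalso
      have hle' : T' ≤ T := by
        rw [Multiset.le_iff_count] at hle ⊢
        intro x
        by_cases hx : x = g⁻¹
        · subst hx
          simp [Multiset.count_eq_zero_of_notMem hmem]
        · have hx' := hle x
          rwa [Multiset.count_cons_of_ne hx] at hx'
      exact hfree T' hle' hne hprod
end
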